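/- Let K be a differential field of characteristic 0, algebraically closed, equipped with a field embedding ℂ → K whose image consists of constants, together with an element z ∈ K such that ∂z = 1, and assume that K is algebraic over its subfield ℂ(z) generated by the image of ℂ and z. Let (𝒦,∂) be a differential field extension of K whose field of constants is exactly the image of ℂ. Let x_1,…,x_n ∈ K and y_1,…,y_n ∈ 𝒦^× satisfy ∂y_i/y_i = ∂x_i for every i. If for every (m_1,…,m_n) ∈ ℤ^n \ {0} the element m_1x_1 + ⋯ + m_nx_n does not lie in the image of ℂ, then y_1,…,y_n are algebraically independent over K, i.e. the transcendence degree of K(y_1,…,y_n) over K equals n. (Case (E) of Ax's theorem for tori, proved via Kolchin's theorem and Formula (1).) -/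

import Mathlib

open Polynomial

namespace AxE

variable {𝒦 : Type*} [Field 𝒦]

section Deriv
variable (D : 𝒦 → 𝒦)

theorem D0 (hadd : ∀ a b : 𝒦, D (a + b) = D a + D b) : D 0 = 0 := by
  have h := hadd 0 0; rw [add_zero] at h; linear_combination -h

theorem Dneg (hadd : ∀ a b : 𝒦, D (a + b) = D a + D b) (a : 𝒦) : D (-a) = -(D a) := by
  have h := hadd a (-a); rw [add_neg_cancel, D0 D hadd] at h; linear_combination -h

theorem Dsum (hadd : ∀ a b : 𝒦, D (a + b) = D a + D b) {ι : Type*} (T : Finset ι) (f : ι → 𝒦) :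
    D (∑ i ∈ T, f i) = ∑ i ∈ T, D (f i) := by
  classical
  induction T using Finset.induction_on with
  | empty => simpa using D0 D hadd
  | @insert a T' ha ih => rw [Finset.sum_insert ha, Finset.sum_insert ha, hadd, ih]

theorem D1 (hmul : ∀ a b : 𝒦, D (a * b) = a * D b + D a * b) : D 1 = 0 := by
  have h := hmul 1 1; rw [mul_one, one_mul, mul_one] at h; linear_combination -h

theorem Dinv (hmul : ∀ a b : 𝒦, D (a * b) = a * D b + D a * b) (a : 𝒦) (ha : a ≠ 0) :
    D a⁻¹ = -(D a) / a ^ 2 := by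
  have h := hmul a a⁻¹
  rw [mul_inv_cancel₀ ha, D1 D hmul] at h
  rw [eq_div_iff (pow_ne_zero 2 ha)]
  linear_combination (-a) * h + (-(D a)) * (mul_inv_cancel₀ ha)

theorem Dpow (hmul : ∀ a b : 𝒦, D (a * b) = a * D b + D a * b)
    (a g : 𝒦) (ha : D a = g * a) (k : ℕ) : D (a ^ k) = (k : 𝒦) * g * a ^ k := by
  induction k with
  | zero => simpa using D1 D hmul
  | succ n ih =>
    rw [pow_succ, hmul, ih, ha]
    push_cast
    ring

theorem Dzpow (hmul : ∀ a b : 𝒦, D (a * b) = a * D b + D a * b)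
    (a g : 𝒦) (ha0 : a ≠ 0) (ha : D a = g * a) (m : ℤ) :
    D (a ^ m) = (m : 𝒦) * g * a ^ m := by
  cases m with
  | ofNat k => simpa [zpow_natCast] using Dpow D hmul a g ha k
  | negSucc k =>
    rw [zpow_negSucc]
    rw [Dinv D hmul _ (pow_ne_zero _ ha0), Dpow D hmul a g ha (k+1)]
    have hpow : a ^ (k+1) ≠ 0 := pow_ne_zero _ ha0
    rw [div_eq_iff (pow_ne_zero 2 hpow)] at *
    field_simp
    push_cast
    ring

theorem Dprod (hadd : ∀ a b : 𝒦, D (a + b) = D a + D b)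
    (hmul : ∀ a b : 𝒦, D (a * b) = a * D b + D a * b)
    {ι : Type*} (T : Finset ι) (f g : ι → 𝒦) (h : ∀ i ∈ T, D (f i) = g i * f i) :
    D (∏ i ∈ T, f i) = (∑ i ∈ T, g i) * ∏ i ∈ T, f i := by
  classical
  induction T using Finset.induction_on with
  | empty => simpa using D1 D hmul
  | @insert a T' hmem ih =>
    rw [Finset.prod_insert hmem, Finset.sum_insert hmem, hmul,
      ih (fun i hi => h i (Finset.mem_insert_of_mem hi)), h a (Finset.mem_insert_self _ _)]
    ring

end Deriv

theorem root_mem_range {F : Type*} [Field F] [IsAlgClosed F] (emb : F →+* 𝒦) :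
    ∀ (p : Polynomial F), p ≠ 0 → ∀ w : 𝒦, p.eval₂ emb w = 0 → w ∈ Set.range emb := by
  suffices h : ∀ N : ℕ, ∀ p : Polynomial F, p.natDegree ≤ N → p ≠ 0 → ∀ w : 𝒦,
      p.eval₂ emb w = 0 → w ∈ Set.range emb by
    intro p hp w hw; exact h p.natDegree p le_rfl hp w hw
  have base : ∀ p : Polynomial F, p.natDegree = 0 → p ≠ 0 → ∀ w : 𝒦,
      p.eval₂ emb w = 0 → w ∈ Set.range emb := by
    intro p h0 hp w hw
    rw [Polynomial.eq_C_of_natDegree_eq_zero h0] at hp hw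
    rw [eval₂_C] at hw
    exact absurd hw (by simpa using fun h => hp (by rw [h, map_zero]))
  intro N
  induction N with
  | zero => intro p hdeg; exact base p (Nat.le_zero.mp hdeg)
  | succ N ih =>
    intro p hdeg hp w hw
    by_cases h0 : p.natDegree = 0
    · exact base p h0 hp w hw
    · obtain ⟨r, hr⟩ := IsAlgClosed.exists_root p (by
        intro hc
        exact h0 (Polynomial.natDegree_eq_zero_iff_degree_le_zero.mpr (le_of_eq hc)))
      obtain ⟨q, hq⟩ := (Polynomial.dvd_iff_isRoot.mpr hr)
      have hqne : q ≠ 0 := fun h => hp (by rw [hq, h, mul_zero])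
      have hdq : q.natDegree ≤ N := by
        have : p.natDegree = 1 + q.natDegree := by
          rw [hq, Polynomial.natDegree_mul (Polynomial.X_sub_C_ne_zero r) hqne,
            natDegree_X_sub_C]
        omega
      rw [hq, eval₂_mul] at hw
      rcases mul_eq_zero.mp hw with h1 | h2
      · simp only [eval₂_sub, eval₂_X, eval₂_C, sub_eq_zero] at h1
        exact ⟨r, h1.symm⟩
      · exact ih q hdq hqne w h2

theorem eval₂_mem_closure {F : Type*} [Field F] (emb : F →+* 𝒦) (s : 𝒦) (p : Polynomial F) :
    p.eval₂ emb s ∈ Subfield.closure (Set.range emb ∪ {s}) := by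
  induction p using Polynomial.induction_on with
  | C a => rw [eval₂_C]; exact Subfield.subset_closure (Or.inl ⟨a, rfl⟩)
  | add p q hp hq => rw [eval₂_add]; exact add_mem hp hq
  | monomial n a ih =>
    rw [eval₂_mul, eval₂_C, eval₂_pow, eval₂_X]
    exact mul_mem (Subfield.subset_closure (Or.inl ⟨a, rfl⟩))
      (pow_mem (Subfield.subset_closure (by simp : s ∈ Set.range ⇑emb ∪ {s})) _)

theorem repr_closure {F : Type*} [Field F] (emb : F →+* 𝒦) (s : 𝒦) {w : 𝒦}
    (hw : w ∈ Subfield.closure (Set.range emb ∪ {s})) :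
    ∃ p q : Polynomial F, q.eval₂ emb s ≠ 0 ∧ w * q.eval₂ emb s = p.eval₂ emb s := by
  induction hw using Subfield.closure_induction with
  | mem u hu =>
    rcases hu with ⟨c, rfl⟩ | hu
    · exact ⟨Polynomial.C c, 1, by simp, by simp⟩
    · rw [Set.mem_singleton_iff.mp hu]
      exact ⟨X, 1, by simp, by simp⟩
  | one => exact ⟨1, 1, by simp, by simp⟩
  | add u v hu hv ihu ihv =>
    obtain ⟨p1, q1, h1, e1⟩ := ihu
    obtain ⟨p2, q2, h2, e2⟩ := ihv
    exact ⟨p1 * q2 + p2 * q1, q1 * q2, by rw [eval₂_mul]; exact mul_ne_zero h1 h2, by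
      simp only [eval₂_add, eval₂_mul]
      linear_combination (eval₂ emb s q2) * e1 + (eval₂ emb s q1) * e2⟩
  | neg u hu ihu =>
    obtain ⟨p1, q1, h1, e1⟩ := ihu
    exact ⟨-p1, q1, h1, by rw [eval₂_neg]; linear_combination -e1⟩
  | inv u hu ihu =>
    obtain ⟨p1, q1, h1, e1⟩ := ihu
    by_cases hx0 : u = 0
    · exact ⟨0, 1, by simp, by simp [hx0]⟩
    · have hp1 : p1.eval₂ emb s ≠ 0 := by
        rw [← e1]; exact mul_ne_zero hx0 h1
      exact ⟨q1, p1, hp1, by rw [← e1, ← mul_assoc, inv_mul_cancel₀ hx0, one_mul]⟩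
  | mul u v hu hv ihu ihv =>
    obtain ⟨p1, q1, h1, e1⟩ := ihu
    obtain ⟨p2, q2, h2, e2⟩ := ihv
    exact ⟨p1 * p2, q1 * q2, by rw [eval₂_mul]; exact mul_ne_zero h1 h2, by
      simp only [eval₂_mul]
      linear_combination (v * eval₂ emb s q2) * e1 + (eval₂ emb s p1) * e2⟩

theorem Dpoly {F : Type*} [Field F] (D : 𝒦 → 𝒦)
    (hadd : ∀ a b : 𝒦, D (a + b) = D a + D b)
    (hmul : ∀ a b : 𝒦, D (a * b) = a * D b + D a * b)
    (emb : F →+* 𝒦) (hC : ∀ c, D (emb c) = 0) (s : 𝒦) (hs : D s = 1)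
    (g : Polynomial F) : D (g.eval₂ emb s) = (derivative g).eval₂ emb s := by
  have hspow : ∀ k : ℕ, D (s ^ (k + 1)) = ((k : 𝒦) + 1) * s ^ k := by
    intro k
    induction k with
    | zero => simpa using hs
    | succ m ihm =>
      rw [pow_succ, hmul, ihm, hs]
      push_cast
      ring
  induction g using Polynomial.induction_on with
  | C a => simp [hC]
  | add p q hp hq => rw [eval₂_add, hadd, hp, hq, derivative_add, eval₂_add]
  | monomial n a _ =>
    rw [eval₂_mul, eval₂_C, eval₂_pow, eval₂_X, hmul, hC, hspow]
    rw [derivative_C_mul, derivative_X_pow]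
    rw [eval₂_mul, eval₂_C, eval₂_mul, eval₂_C, eval₂_pow, eval₂_X, map_natCast]
    push_cast
    ring

theorem isAlg_transfer {A B : Type*} [Field A] [Field B] [Algebra A 𝒦] [Algebra B 𝒦]
    (g : A →+* B) (hg : ∀ a, algebraMap B 𝒦 (g a) = algebraMap A 𝒦 a) {w : 𝒦}
    (h : IsAlgebraic A w) : IsAlgebraic B w := by
  obtain ⟨p, hp, he⟩ := h
  refine ⟨p.map g, ?_, ?_⟩
  · exact (Polynomial.map_ne_zero_iff g.injective).mpr hp
  · rw [Polynomial.aeval_def, Polynomial.eval₂_map,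
      show (algebraMap B 𝒦).comp g = algebraMap A 𝒦 from RingHom.ext hg]
    exact he

end AxE

open Polynomial

namespace AxE

variable {𝒦 : Type*} [Field 𝒦]

theorem exchange {F : Type*} [Field F] (emb : F →+* 𝒦) (z s : 𝒦)
    (hψz : ∀ g : Polynomial F, g ≠ 0 → g.eval₂ emb z ≠ 0)
    (hψs : ∀ g : Polynomial F, g ≠ 0 → g.eval₂ emb s ≠ 0)
    (hs : IsAlgebraic (Subfield.closure (Set.range ⇑emb ∪ {z})) s) :
    IsAlgebraic (Subfield.closure (Set.range ⇑emb ∪ {s})) z := by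
  classical
  obtain ⟨W, hW0, hWe⟩ := hs
  set d := W.natDegree with hd
  set R := Finset.range (d + 1) with hR
  -- sum form of the algebraic relation
  have hsum : ∑ j ∈ R, ((W.coeff j) : 𝒦) * s ^ j = 0 := by
    have h := Polynomial.aeval_eq_sum_range (p := W) s
    rw [hWe] at h
    rw [← h.symm] at *
    rw [← h]
    apply Finset.sum_congr rfl
    intro j _
    rw [Algebra.smul_def]
    rfl
  -- rational representation of the coefficients
  have hrepr : ∀ j : ℕ, ∃ pq : Polynomial F × Polynomial F,
      (pq.2).eval₂ emb z ≠ 0 ∧ ((W.coeff j) : 𝒦) * (pq.2).eval₂ emb z = (pq.1).eval₂ emb z := by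
    intro j
    obtain ⟨p, q, h1, h2⟩ := repr_closure emb z (SetLike.coe_mem (W.coeff j))
    exact ⟨⟨p, q⟩, h1, h2⟩
  choose pq hq hpq using hrepr
  set δ : Polynomial F := ∏ j ∈ R, (pq j).2 with hδ
  set P : ℕ → Polynomial F := fun j => (pq j).1 * ∏ i ∈ R.erase j, (pq i).2 with hP
  have hδne : δ.eval₂ emb z ≠ 0 := by
    rw [hδ, show eval₂ emb z (∏ j ∈ R, (pq j).2) = ∏ j ∈ R, eval₂ emb z ((pq j).2) from
      map_prod (eval₂RingHom emb z) _ R]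
    exact Finset.prod_ne_zero_iff.mpr fun j _ => hq j
  have hPrel : ∀ j ∈ R, ((W.coeff j) : 𝒦) * δ.eval₂ emb z = (P j).eval₂ emb z := by
    intro j hj
    have hδsplit : δ = (pq j).2 * ∏ i ∈ R.erase j, (pq i).2 := (Finset.mul_prod_erase R _ hj).symm
    rw [hδsplit, eval₂_mul, ← mul_assoc, hpq j, hP]
    rw [eval₂_mul]
  have hsum2 : ∑ j ∈ R, (P j).eval₂ emb z * s ^ j = 0 := by
    have h := congrArg (· * δ.eval₂ emb z) hsum
    simp only [zero_mul, Finset.sum_mul] at h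
    rw [← h]
    apply Finset.sum_congr rfl
    intro j hj
    rw [← hPrel j hj]
    ring
  -- a nonzero numerator
  have hWd : W.coeff d ≠ 0 := by
    rw [hd]
    exact Polynomial.leadingCoeff_ne_zero.mpr hW0
  have hdR : d ∈ R := by rw [hR]; exact Finset.self_mem_range_succ d
  have hPd : P d ≠ 0 := by
    intro h
    have h2 := hPrel d hdR
    rw [h, eval₂_zero] at h2
    exact (mul_ne_zero (fun hh => hWd (Subtype.ext hh)) hδne) h2
  -- swap the double sum
  set M := (R.sup fun j => (P j).natDegree) + 1 with hM
  have hMj : ∀ j ∈ R, (P j).natDegree < M := by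
    intro j hj
    rw [hM]
    exact Nat.lt_succ_of_le (Finset.le_sup (f := fun j => (P j).natDegree) hj)
  set g : ℕ → Polynomial F := fun i => ∑ j ∈ R, Polynomial.monomial j ((P j).coeff i) with hg
  have hgev : ∀ i, (g i).eval₂ emb s = ∑ j ∈ R, emb ((P j).coeff i) * s ^ j := by
    intro i
    rw [hg]
    rw [show ((∑ j ∈ R, Polynomial.monomial j ((P j).coeff i)).eval₂ emb s)
      = ∑ j ∈ R, (Polynomial.monomial j ((P j).coeff i)).eval₂ emb s from map_sum (eval₂RingHom emb s) _ R]
    apply Finset.sum_congr rfl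
    intro j _
    rw [eval₂_monomial]
  have hswap : ∑ i ∈ Finset.range M, (g i).eval₂ emb s * z ^ i = 0 := by
    have h := hsum2
    have hexp : ∀ j ∈ R, (P j).eval₂ emb z = ∑ i ∈ Finset.range M, emb ((P j).coeff i) * z ^ i :=
      fun j hj => Polynomial.eval₂_eq_sum_range' emb (hMj j hj) z
    calc ∑ i ∈ Finset.range M, (g i).eval₂ emb s * z ^ i
        = ∑ i ∈ Finset.range M, ∑ j ∈ R, emb ((P j).coeff i) * s ^ j * z ^ i := by
          apply Finset.sum_congr rfl; intro i _; rw [hgev, Finset.sum_mul]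
      _ = ∑ j ∈ R, ∑ i ∈ Finset.range M, emb ((P j).coeff i) * s ^ j * z ^ i := Finset.sum_comm
      _ = ∑ j ∈ R, (P j).eval₂ emb z * s ^ j := by
          apply Finset.sum_congr rfl; intro j hj
          rw [hexp j hj, Finset.sum_mul]
          apply Finset.sum_congr rfl; intro i _; ring
      _ = 0 := hsum2
  -- the witness polynomial over the closure of {s}
  set V : Polynomial ↥(Subfield.closure (Set.range ⇑emb ∪ {s})) :=
    ∑ i ∈ Finset.range M, Polynomial.monomial i
      (⟨(g i).eval₂ emb s, eval₂_mem_closure emb s (g i)⟩ :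
        ↥(Subfield.closure (Set.range ⇑emb ∪ {s}))) with hV
  have hVcoeff : ∀ γ, V.coeff γ = if γ ∈ Finset.range M then
      (⟨(g γ).eval₂ emb s, eval₂_mem_closure emb s (g γ)⟩ :
        ↥(Subfield.closure (Set.range ⇑emb ∪ {s}))) else 0 := by
    intro γ
    rw [hV, Polynomial.finset_sum_coeff]
    simp only [Polynomial.coeff_monomial]
    exact Finset.sum_ite_eq' _ _ _
  set i0 := (P d).natDegree with hi0
  have hi0M : i0 ∈ Finset.range M := Finset.mem_range.mpr (hMj d hdR)
  have hgi0 : g i0 ≠ 0 := by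
    intro h
    have hco : (g i0).coeff d = (P d).coeff i0 := by
      rw [hg, Polynomial.finset_sum_coeff]
      simp only [Polynomial.coeff_monomial]
      exact (Finset.sum_ite_eq' R d _).trans (if_pos hdR)
    rw [h, Polynomial.coeff_zero] at hco
    exact (Polynomial.leadingCoeff_ne_zero.mpr hPd) hco.symm
  have hV0 : V ≠ 0 := by
    intro h
    have := hVcoeff i0
    rw [h, Polynomial.coeff_zero, if_pos hi0M] at this
    have h2 := congrArg Subtype.val this.symm
    exact (hψs _ hgi0) h2
  refine ⟨V, hV0, ?_⟩
  rw [hV, map_sum]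
  have : ∀ i ∈ Finset.range M, (Polynomial.aeval z)
      (Polynomial.monomial i (⟨(g i).eval₂ emb s, eval₂_mem_closure emb s (g i)⟩ :
        ↥(Subfield.closure (Set.range ⇑emb ∪ {s})))) = (g i).eval₂ emb s * z ^ i := by
    intro i _
    rw [Polynomial.aeval_monomial]
    rfl
  rw [Finset.sum_congr rfl this, hswap]

end AxE

open Polynomial

namespace AxE

variable {𝒦 : Type*} [Field 𝒦]

set_option maxHeartbeats 2000000 in
set_option synthInstance.maxHeartbeats 1000000 in
theorem no_exp {F : Type*} [Field F] [IsAlgClosed F] [CharZero F]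
    (D : 𝒦 → 𝒦)
    (hadd : ∀ a b : 𝒦, D (a + b) = D a + D b)
    (hmul : ∀ a b : 𝒦, D (a * b) = a * D b + D a * b)
    (emb : F →+* 𝒦) (hconst : ∀ w : 𝒦, D w = 0 ↔ w ∈ Set.range emb)
    (z : 𝒦) (hz : D z = 1)
    (s t : 𝒦)
    (hs : IsAlgebraic (Subfield.closure (Set.range ⇑emb ∪ {z})) s)
    (ht : IsAlgebraic (Subfield.closure (Set.range ⇑emb ∪ {z})) t)
    (ht0 : t ≠ 0) (hDt : D t = D s * t) : s ∈ Set.range emb := by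
  classical
  by_contra hsnr
  have hDs0 : D s ≠ 0 := fun h => hsnr ((hconst s).mp h)
  have hz_nr : z ∉ Set.range ⇑emb := by
    intro hzr
    have h := (hconst z).mpr hzr
    rw [hz] at h
    exact one_ne_zero h
  have hψz : ∀ g : Polynomial F, g ≠ 0 → g.eval₂ emb z ≠ 0 := fun g hg h0 =>
    hz_nr (root_mem_range emb g hg z h0)
  have hψs : ∀ g : Polynomial F, g ≠ 0 → g.eval₂ emb s ≠ 0 := fun g hg h0 =>
    hsnr (root_mem_range emb g hg s h0)
  set F1 : Subfield 𝒦 := Subfield.closure (Set.range ⇑emb ∪ {s}) with hF1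
  -- normalized derivation
  set Dn : 𝒦 → 𝒦 := fun w => D w * (D s)⁻¹ with hDn
  have hadd' : ∀ a b : 𝒦, Dn (a + b) = Dn a + Dn b := by
    intro a b; simp only [hDn]; rw [hadd]; ring
  have hmul' : ∀ a b : 𝒦, Dn (a * b) = a * Dn b + Dn a * b := by
    intro a b; simp only [hDn]; rw [hmul]; ring
  have hDns : Dn s = 1 := by simp only [hDn]; exact mul_inv_cancel₀ hDs0
  have hDnc : ∀ cc : F, Dn (emb cc) = 0 := by
    intro cc; simp only [hDn]; rw [(hconst _).mpr ⟨cc, rfl⟩, zero_mul]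
  have hDnt : Dn t = t := by
    simp only [hDn]; rw [hDt]; field_simp
  have hpoly : ∀ g : Polynomial F, Dn (g.eval₂ emb s) = (derivative g).eval₂ emb s :=
    Dpoly Dn hadd' hmul' emb hDnc s hDns
  -- stability of F1 under Dn
  have hstab : ∀ w ∈ F1, Dn w ∈ F1 := by
    intro w hw
    obtain ⟨p, q, hq, he⟩ := repr_closure emb s hw
    have h2 : Dn w * q.eval₂ emb s + w * (derivative q).eval₂ emb s
        = (derivative p).eval₂ emb s := by
      have h3 := congrArg Dn he
      rw [hmul', hpoly, hpoly] at h3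
      linear_combination h3
    have h4 : Dn w = ((derivative p).eval₂ emb s - w * (derivative q).eval₂ emb s)
        / q.eval₂ emb s := by
      rw [eq_div_iff hq]
      linear_combination h2
    rw [h4]
    exact div_mem (sub_mem (eval₂_mem_closure emb s _)
      (mul_mem hw (eval₂_mem_closure emb s _))) (eval₂_mem_closure emb s _)
  -- z is algebraic over F1, hence t is integral over F1
  have halg_z : IsAlgebraic F1 z := exchange emb z s hψz hψs hs
  have hzint : IsIntegral ↥F1 z := halg_z.isIntegral
  set E : IntermediateField ↥F1 𝒦 := IntermediateField.adjoin ↥F1 {z} with hE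
  haveI : FiniteDimensional ↥F1 ↥E := IntermediateField.adjoin.finiteDimensional hzint
  haveI : Algebra.IsIntegral ↥F1 ↥E := Algebra.IsIntegral.of_finite _ _
  have hsubset : ∀ w ∈ Subfield.closure (Set.range ⇑emb ∪ {z}), w ∈ E := by
    have hle : Subfield.closure (Set.range ⇑emb ∪ {z}) ≤ E.toSubfield := by
      apply Subfield.closure_le.mpr
      rintro w (⟨cc, rfl⟩ | hw)
      · have hmem : emb cc ∈ F1 := Subfield.subset_closure (Or.inl ⟨cc, rfl⟩)
        have : algebraMap ↥F1 𝒦 ⟨emb cc, hmem⟩ ∈ E := E.algebraMap_mem _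
        exact this
      · rw [Set.mem_singleton_iff.mp hw]
        exact IntermediateField.subset_adjoin _ _ rfl
    intro w hw
    exact hle hw
  set ι : ↥(Subfield.closure (Set.range ⇑emb ∪ {z})) →+* ↥E :=
    { toFun := fun a => ⟨a.1, hsubset a.1 a.2⟩, map_one' := rfl, map_mul' := fun _ _ => rfl,
      map_zero' := rfl, map_add' := fun _ _ => rfl } with hι
  have ht' : IsAlgebraic ↥E t := isAlg_transfer (𝒦 := 𝒦) ι (fun a => rfl) ht
  have htint : IsIntegral ↥F1 t := isIntegral_trans t ht'.isIntegral
  -- minpoly argument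
  set P : Polynomial ↥F1 := minpoly ↥F1 t with hP
  have hPmonic : P.Monic := minpoly.monic htint
  have hPne : P ≠ 0 := hPmonic.ne_zero
  have hPaev : (Polynomial.aeval t) P = 0 := minpoly.aeval _ _
  set dP := P.natDegree with hdP
  have hdP1 : 1 ≤ dP := minpoly.natDegree_pos htint
  have ha0 : P.coeff 0 ≠ 0 := minpoly.coeff_zero_ne_zero htint ht0
  have hsum : ∑ j ∈ Finset.range (dP + 1), ((P.coeff j) : 𝒦) * t ^ j = 0 := by
    have h := Polynomial.aeval_eq_sum_range (p := P) t
    rw [hPaev] at h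
    calc ∑ j ∈ Finset.range (dP + 1), ((P.coeff j) : 𝒦) * t ^ j
        = ∑ j ∈ Finset.range (dP + 1), (P.coeff j) • t ^ j := by
          apply Finset.sum_congr rfl; intro j _; rw [Algebra.smul_def]; rfl
      _ = 0 := h.symm
  have hDnpow : ∀ jj : ℕ, Dn (t ^ jj) = (jj : 𝒦) * t ^ jj := by
    intro jj
    have h := Dpow Dn hmul' t 1 (by rw [hDnt]; ring) jj
    rw [h]; ring
  have hsum2 : ∑ j ∈ Finset.range (dP + 1),
      (Dn ((P.coeff j) : 𝒦) + (j : 𝒦) * ((P.coeff j) : 𝒦)) * t ^ j = 0 := by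
    have h6 := congrArg Dn hsum
    rw [Dsum Dn hadd', D0 Dn hadd'] at h6
    rw [← h6]
    apply Finset.sum_congr rfl
    intro j _
    rw [hmul', hDnpow]
    ring
  set b : ℕ → ↥F1 := fun j => ⟨Dn ((P.coeff j) : 𝒦) + (j : 𝒦) * ((P.coeff j) : 𝒦),
    add_mem (hstab _ (SetLike.coe_mem _))
      (mul_mem (natCast_mem F1 j) (SetLike.coe_mem _))⟩ with hb
  set Q : Polynomial ↥F1 := ∑ j ∈ Finset.range (dP + 1), Polynomial.monomial j (b j) with hQ
  have hQaev : (Polynomial.aeval t) Q = 0 := by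
    rw [hQ, map_sum]
    have h7 : ∀ j ∈ Finset.range (dP + 1),
        (Polynomial.aeval t) (Polynomial.monomial j (b j)) = ((b j) : 𝒦) * t ^ j := by
      intro j _
      rw [Polynomial.aeval_monomial]
      rfl
    rw [Finset.sum_congr rfl h7]
    exact hsum2
  have hQcoeff : ∀ γ, Q.coeff γ = if γ ∈ Finset.range (dP + 1) then b γ else 0 := by
    intro γ
    rw [hQ, Polynomial.finset_sum_coeff]
    simp only [Polynomial.coeff_monomial]
    exact Finset.sum_ite_eq' _ _ _
  set Rp : Polynomial ↥F1 := Q - Polynomial.C (dP : ↥F1) * P with hRp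
  have hRaev : (Polynomial.aeval t) Rp = 0 := by
    rw [hRp, map_sub, map_mul, hQaev, Polynomial.aeval_C, hPaev, mul_zero, sub_zero]
  have hRdeg : Rp.degree < P.degree := by
    rw [Polynomial.degree_eq_natDegree hPne]
    apply Polynomial.degree_lt_iff_coeff_zero _ _ |>.mpr
    intro jj hjj
    rw [hRp, Polynomial.coeff_sub, Polynomial.coeff_C_mul]
    rcases Nat.lt_or_ge dP jj with hlt | hge
    · rw [hQcoeff jj, if_neg (by simp [Finset.mem_range]; omega),
        Polynomial.coeff_eq_zero_of_natDegree_lt (by rw [← hdP]; omega), mul_zero, sub_zero]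
    · have hjj' : dP ≤ jj := by exact_mod_cast hjj
      have hjd : jj = dP := le_antisymm hge hjj'
      have hlead : P.coeff dP = 1 := hPmonic.coeff_natDegree
      have hbval : b dP = (dP : ↥F1) := by
        apply Subtype.ext
        simp only [hb]
        rw [hlead]
        push_cast
        rw [D1 Dn hmul']
        ring
      rw [hjd, hQcoeff dP, if_pos (Finset.self_mem_range_succ dP), hlead, mul_one, hbval,
        sub_self]
  have hR0 : Rp = 0 := by
    by_contra hne'
    exact absurd (minpoly.degree_le_of_ne_zero ↥F1 t hne' hRaev) (not_le.mpr hRdeg)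
  have hkey : Dn ((P.coeff 0) : 𝒦) = (dP : 𝒦) * ((P.coeff 0) : 𝒦) := by
    have h8 : Rp.coeff 0 = 0 := by rw [hR0, Polynomial.coeff_zero]
    rw [hRp, Polynomial.coeff_sub, Polynomial.coeff_C_mul, sub_eq_zero] at h8
    rw [hQcoeff 0, if_pos (Finset.mem_range.mpr (by omega))] at h8
    have h9 := congrArg Subtype.val h8
    simp only [hb] at h9
    push_cast at h9
    linear_combination h9
  -- final rational-function contradiction
  set a0 : 𝒦 := ((P.coeff 0) : 𝒦) with ha0def
  have ha0F1 : a0 ∈ F1 := SetLike.coe_mem _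
  have ha0ne : a0 ≠ 0 := fun h => ha0 (Subtype.ext h)
  obtain ⟨p, q, hqne, hpq⟩ := repr_closure emb s ha0F1
  have hpne : p.eval₂ emb s ≠ 0 := by rw [← hpq]; exact mul_ne_zero ha0ne hqne
  have hp0 : p ≠ 0 := fun h => hpne (by rw [h, eval₂_zero])
  have hq0 : q ≠ 0 := fun h => hqne (by rw [h, eval₂_zero])
  have h7 : Dn a0 * q.eval₂ emb s + a0 * (derivative q).eval₂ emb s
      = (derivative p).eval₂ emb s := by
    have h3 := congrArg Dn hpq
    rw [hmul', hpoly, hpoly] at h3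
    linear_combination h3
  have h8 : (dP : 𝒦) * a0 * q.eval₂ emb s + a0 * (derivative q).eval₂ emb s
      = (derivative p).eval₂ emb s := by
    rw [← hkey]; exact h7
  have h9 : (dP : 𝒦) * p.eval₂ emb s * q.eval₂ emb s
      + p.eval₂ emb s * (derivative q).eval₂ emb s
      = (derivative p).eval₂ emb s * q.eval₂ emb s := by
    linear_combination (q.eval₂ emb s) * h8 -
      ((dP : 𝒦) * q.eval₂ emb s + (derivative q).eval₂ emb s) * hpq
  have h10 : Polynomial.C ((dP : F)) * p * q + p * derivative q = derivative p * q := by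
    by_contra hne'
    apply hψs _ (sub_ne_zero.mpr hne')
    simp only [eval₂_sub, eval₂_add, eval₂_mul, eval₂_C, map_natCast, eval₂_natCast]
    linear_combination h9
  set N := p.natDegree + q.natDegree with hN
  have hc1 : (Polynomial.C ((dP : F)) * p * q).coeff N
      = (dP : F) * (p.leadingCoeff * q.leadingCoeff) := by
    rw [mul_assoc, Polynomial.coeff_C_mul, Polynomial.coeff_mul_degree_add_degree]
  have hc2 : (p * derivative q).coeff N = 0 := by
    by_cases hqd : q.natDegree = 0
    · rw [show derivative q = 0 from by
        rw [Polynomial.eq_C_of_natDegree_eq_zero hqd]; exact Polynomial.derivative_C]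
      rw [mul_zero, Polynomial.coeff_zero]
    · apply Polynomial.coeff_eq_zero_of_natDegree_lt
      calc (p * derivative q).natDegree ≤ p.natDegree + (derivative q).natDegree :=
            Polynomial.natDegree_mul_le
        _ < N := by
            have := Polynomial.natDegree_derivative_lt hqd
            omega
  have hc3 : (derivative p * q).coeff N = 0 := by
    by_cases hpd : p.natDegree = 0
    · rw [show derivative p = 0 from by
        rw [Polynomial.eq_C_of_natDegree_eq_zero hpd]; exact Polynomial.derivative_C]
      rw [zero_mul, Polynomial.coeff_zero]
    · apply Polynomial.coeff_eq_zero_of_natDegree_lt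
      calc (derivative p * q).natDegree ≤ (derivative p).natDegree + q.natDegree :=
            Polynomial.natDegree_mul_le
        _ < N := by
            have := Polynomial.natDegree_derivative_lt hpd
            omega
  have h11 := congrArg (fun W => Polynomial.coeff W N) h10
  simp only [Polynomial.coeff_add, hc1, hc2, hc3, add_zero] at h11
  have hlp : p.leadingCoeff ≠ 0 := Polynomial.leadingCoeff_ne_zero.mpr hp0
  have hlq : q.leadingCoeff ≠ 0 := Polynomial.leadingCoeff_ne_zero.mpr hq0
  have hdPne : dP ≠ 0 := by omega
  have hdF : ((dP : F)) ≠ 0 := Nat.cast_ne_zero.mpr hdPne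
  exact (mul_ne_zero hdF (mul_ne_zero hlp hlq)) h11

end AxE

open Polynomial

namespace AxE

variable {𝒦 : Type*} [Field 𝒦]

theorem kolchin {F : Type*} [Field F] (D : 𝒦 → 𝒦)
    (hadd : ∀ a b : 𝒦, D (a + b) = D a + D b)
    (hmul : ∀ a b : 𝒦, D (a * b) = a * D b + D a * b)
    (emb : F →+* 𝒦) (hconst : ∀ w : 𝒦, D w = 0 ↔ w ∈ Set.range emb)
    (K : Subfield 𝒦) (hDK : ∀ x ∈ K, D x ∈ K) (hCK : Set.range emb ⊆ K)
    (n : ℕ) (x : Fin n → 𝒦) (hx : ∀ i, x i ∈ K)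
    (y : Fin n → 𝒦ˣ) (hxy : ∀ i, D (y i) / (y i : 𝒦) = D (x i))
    (hdep : ¬ AlgebraicIndependent K (fun i => (y i : 𝒦))) :
    ∃ m : Fin n → ℤ, m ≠ 0 ∧ ∃ t : 𝒦, t ∈ K ∧ t ≠ 0 ∧
      D t = (∑ i, (m i : 𝒦) * D (x i)) * t := by
  classical
  set Y : Fin n → 𝒦 := fun i => (y i : 𝒦) with hY
  have hDy : ∀ i, D (Y i) = D (x i) * Y i := by
    intro i
    have := hxy i
    field_simp at this
    linear_combination this
  rw [algebraicIndependent_iff] at hdep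
  push_neg at hdep
  obtain ⟨p0, hp0ev, hp0ne⟩ := hdep
  set SS : Set ℕ := {N | ∃ p : MvPolynomial (Fin n) K, p ≠ 0 ∧
    (MvPolynomial.aeval Y) p = 0 ∧ p.support.card = N} with hSS
  have hne : p0.support.card ∈ SS := ⟨p0, hp0ne, hp0ev, rfl⟩
  obtain ⟨p, hpne, hpev, hpcard⟩ := Nat.sInf_mem (Set.nonempty_of_mem hne)
  have hmin : ∀ q : MvPolynomial (Fin n) K, q ≠ 0 → (MvPolynomial.aeval Y) q = 0 →
      p.support.card ≤ q.support.card := by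
    intro q hq hqe
    rw [hpcard]
    exact Nat.sInf_le ⟨q, hq, hqe, rfl⟩
  -- monomials
  set YY : (Fin n →₀ ℕ) → 𝒦 := fun α => ∏ i, Y i ^ (α i) with hYY
  have hYYne : ∀ α, YY α ≠ 0 := by
    intro α
    exact Finset.prod_ne_zero_iff.mpr fun i _ => pow_ne_zero _ (Units.ne_zero (y i))
  set A : (Fin n →₀ ℕ) → 𝒦 := fun α => ∑ i, ((α i : 𝒦)) * D (x i) with hA
  have hDYY : ∀ α, D (YY α) = A α * YY α := by
    intro α
    exact Dprod D hadd hmul Finset.univ _ _ fun i _ => Dpow D hmul (Y i) (D (x i)) (hDy i) (α i)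
  have hAK : ∀ α, A α ∈ K := fun α =>
    Subfield.sum_mem _ fun i _ => mul_mem (natCast_mem K _) (hDK _ (hx i))
  -- expansion
  have hexp : ∀ q : MvPolynomial (Fin n) K,
      (MvPolynomial.aeval Y) q = ∑ α ∈ q.support, (q.coeff α).val * YY α := by
    intro q
    rw [MvPolynomial.aeval_def, MvPolynomial.eval₂_eq']
    rfl
  set c : (Fin n →₀ ℕ) → 𝒦 := fun α => (p.coeff α).val with hc
  have h1 : ∑ α ∈ p.support, c α * YY α = 0 := by rw [← hexp]; exact hpev
  obtain ⟨β, hβ⟩ := (MvPolynomial.support_nonempty.mpr hpne)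
  have hcβ : c β ≠ 0 := fun h => (MvPolynomial.mem_support_iff.mp hβ) (Subtype.ext h)
  set r : 𝒦 := D (c β) / c β + A β with hr
  have hcK : ∀ α, c α ∈ K := fun α => SetLike.coe_mem _
  have hrK : r ∈ K := add_mem (div_mem (hDK _ (hcK β)) (hcK β)) (hAK β)
  set κ : (Fin n →₀ ℕ) → 𝒦 := fun α => D (c α) + c α * A α - c α * r with hκ
  have hκK : ∀ α, κ α ∈ K := fun α =>
    sub_mem (add_mem (hDK _ (hcK α)) (mul_mem (hcK α) (hAK α))) (mul_mem (hcK α) hrK)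
  have hκβ : κ β = 0 := by
    rw [hκ]
    simp only [hr]
    field_simp
    ring
  have hDrel : ∑ α ∈ p.support, κ α * YY α = 0 := by
    have h2 : D (∑ α ∈ p.support, c α * YY α) = 0 := by rw [h1, D0 D hadd]
    rw [Dsum D hadd] at h2
    have h3 : ∑ α ∈ p.support, (D (c α) + c α * A α) * YY α = 0 := by
      rw [← h2]
      apply Finset.sum_congr rfl
      intro α _
      rw [hmul, hDYY]; ring
    have h4 : ∑ α ∈ p.support, (c α * r) * YY α = 0 := by
      have heq : ∑ α ∈ p.support, (c α * r) * YY α = r * ∑ α ∈ p.support, c α * YY α := by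
        rw [Finset.mul_sum]; apply Finset.sum_congr rfl; intro α _; ring
      rw [heq, h1, mul_zero]
    calc ∑ α ∈ p.support, κ α * YY α
        = ∑ α ∈ p.support, ((D (c α) + c α * A α) * YY α - (c α * r) * YY α) := by
          apply Finset.sum_congr rfl; intro α _; rw [hκ]; ring
      _ = 0 := by rw [Finset.sum_sub_distrib, h3, h4, sub_zero]
  -- the smaller polynomial
  set p' : MvPolynomial (Fin n) K :=
    ∑ α ∈ p.support.erase β, MvPolynomial.monomial α (⟨κ α, hκK α⟩ : K) with hp'
  have hp'coeff : ∀ γ, p'.coeff γ =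
      if γ ∈ p.support.erase β then (⟨κ γ, hκK γ⟩ : K) else 0 := by
    intro γ
    rw [hp', MvPolynomial.coeff_sum]
    simp only [MvPolynomial.coeff_monomial]
    exact Finset.sum_ite_eq' _ _ _
  have haevmono : ∀ (α : Fin n →₀ ℕ) (a : K),
      (MvPolynomial.aeval Y) (MvPolynomial.monomial α a) = (a : 𝒦) * YY α := by
    intro α a
    rw [MvPolynomial.aeval_monomial]
    congr 1
    rw [hYY]
    rw [Finsupp.prod_fintype]
    intro i; exact pow_zero _
  have hev' : (MvPolynomial.aeval Y) p' = 0 := by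
    rw [hp', map_sum]
    have : ∑ α ∈ p.support.erase β, (MvPolynomial.aeval Y) (MvPolynomial.monomial α (⟨κ α, hκK α⟩ : K))
        = ∑ α ∈ p.support.erase β, κ α * YY α := by
      apply Finset.sum_congr rfl; intro α _; rw [haevmono]
    rw [this]
    have h5 := Finset.sum_erase_add p.support (fun α => κ α * YY α) hβ
    simp only [hκβ, zero_mul, add_zero] at h5
    rw [h5, hDrel]
  have hp'0 : p' = 0 := by
    by_contra hne'
    have hle := hmin p' hne' hev'
    have hsub : p'.support ⊆ p.support.erase β := by
      intro γ hγ
      by_contra hcon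
      have := MvPolynomial.mem_support_iff.mp hγ
      rw [hp'coeff γ, if_neg hcon] at this
      exact this rfl
    have : p'.support.card ≤ p.support.card - 1 := by
      calc p'.support.card ≤ (p.support.erase β).card := Finset.card_le_card hsub
        _ = p.support.card - 1 := Finset.card_erase_of_mem hβ
    have hpos : 0 < p.support.card := Finset.card_pos.mpr ⟨β, hβ⟩
    omega
  have hκ0 : ∀ γ ∈ p.support.erase β, κ γ = 0 := by
    intro γ hγ
    have := hp'coeff γ
    rw [hp'0, if_pos hγ] at this
    have h := congrArg (Subtype.val) this.symm
    simpa using h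
  -- at least two monomials
  have hcard2 : 2 ≤ p.support.card := by
    by_contra hcon
    have hc1 : p.support.card = 1 := by
      have := Finset.card_pos.mpr ⟨β, hβ⟩; omega
    obtain ⟨a, ha⟩ := Finset.card_eq_one.mp hc1
    have hab : β = a := by rw [ha] at hβ; exact Finset.mem_singleton.mp hβ
    rw [ha, ← hab, Finset.sum_singleton] at h1
    exact (mul_ne_zero hcβ (hYYne β)) h1
  have herase : (p.support.erase β).Nonempty := by
    rw [← Finset.card_pos, Finset.card_erase_of_mem hβ]
    omega
  obtain ⟨α, hα⟩ := herase
  have hαβ : α ≠ β := Finset.ne_of_mem_erase hα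
  have hαsup : α ∈ p.support := Finset.mem_of_mem_erase hα
  have hcα : c α ≠ 0 := fun h => (MvPolynomial.mem_support_iff.mp hαsup) (Subtype.ext h)
  have hκα : κ α = 0 := hκ0 α hα
  -- the integer vector
  set m : Fin n → ℤ := fun i => (α i : ℤ) - (β i : ℤ) with hm
  have hmne : m ≠ 0 := by
    intro h
    apply hαβ
    ext i
    have := congrFun h i
    simp only [hm, Pi.zero_apply, sub_eq_zero] at this
    exact_mod_cast this
  set g : 𝒦 := ∑ i, (m i : 𝒦) * D (x i) with hg
  set w : 𝒦 := ∏ i, Y i ^ (m i) with hw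
  have hw0 : w ≠ 0 :=
    Finset.prod_ne_zero_iff.mpr fun i _ => zpow_ne_zero _ (Units.ne_zero (y i))
  have hDw : D w = g * w :=
    Dprod D hadd hmul Finset.univ _ _ fun i _ =>
      Dzpow D hmul (Y i) (D (x i)) (Units.ne_zero (y i)) (hDy i) (m i)
  have hAαβ : A α - A β = g := by
    rw [hA, hg, ← Finset.sum_sub_distrib]
    apply Finset.sum_congr rfl
    intro i _
    rw [hm]
    push_cast
    ring
  -- derivative computations
  have hDcα : D (c α) = c α * r - c α * A α := by
    rw [hκ] at hκα; linear_combination hκα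
  have hDcβ : D (c β) = c β * r - c β * A β := by
    rw [hr]; field_simp; ring
  have hDinvβ : D ((c β)⁻¹) = -(D (c β)) / (c β) ^ 2 := Dinv D hmul _ hcβ
  set σ : 𝒦 := c α * (c β)⁻¹ * w with hσ
  have hDσ : D σ = (c α * (c β)⁻¹ * w) * (g - (A α - A β)) := by
    rw [hσ, hmul, hmul, hDw, hDinvβ, hDcα, hDcβ]
    field_simp
    ring
  have hDσ0 : D σ = 0 := by rw [hDσ, hAαβ, sub_self, mul_zero]
  have hσK : σ ∈ Set.range emb := (hconst σ).mp hDσ0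
  have hwK : w ∈ K := by
    have hww : w = σ * c β * (c α)⁻¹ := by
      rw [hσ]; field_simp; try ring
    rw [hww]
    exact mul_mem (mul_mem (hCK hσK) (hcK β)) (inv_mem (hcK α))
  exact ⟨m, hmne, w, hwK, hw0, by rw [hDw, hg]⟩

end AxE

/-- **Case (E) of Ax's theorem for tori** (§1.1/§2): `K = ℂ(z)^alg` with derivation
extending `d/dz`, `(𝒦, D)` a differential extension with constants exactly `ℂ`.
If `x₁,…,xₙ ∈ K`, `y₁,…,yₙ ∈ 𝒦ˣ` satisfy `D yᵢ / yᵢ = D xᵢ` and no nonzero integer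
combination `m₁x₁ + ⋯ + mₙxₙ` is a complex constant, then `y₁,…,yₙ` are
algebraically independent over `K`. -/
theorem ax_case_E_tori
    (𝒦 : Type*) [Field 𝒦] [CharZero 𝒦]
    (D : 𝒦 → 𝒦)
    (hadd : ∀ a b : 𝒦, D (a + b) = D a + D b)
    (hmul : ∀ a b : 𝒦, D (a * b) = a * D b + D a * b)
    -- an embedding of ℂ whose image is exactly the field of constants of 𝒦
    (emb : ℂ →+* 𝒦) (hconst : ∀ w : 𝒦, D w = 0 ↔ w ∈ Set.range emb)
    -- the base field K : a differential subfield, algebraically closed,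
    -- containing ℂ and an element z with D z = 1, and algebraic over ℂ(z)
    (K : Subfield 𝒦) (hDK : ∀ x ∈ K, D x ∈ K) (hKac : IsAlgClosed K)
    (hCK : Set.range emb ⊆ K)
    (z : 𝒦) (hzK : z ∈ K) (hz : D z = 1)
    (halg : ∀ x ∈ K, IsAlgebraic (Subfield.closure (Set.range emb ∪ {z})) x)
    -- the data: xᵢ ∈ K, yᵢ ∈ 𝒦ˣ with D yᵢ / yᵢ = D xᵢ
    (n : ℕ) (x : Fin n → 𝒦) (hx : ∀ i, x i ∈ K)
    (y : Fin n → 𝒦ˣ)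
    (hxy : ∀ i, D (y i) / (y i : 𝒦) = D (x i))
    -- non-degeneracy: no nonzero integer combination of the xᵢ is a constant
    (hnd : ∀ m : Fin n → ℤ, m ≠ 0 → (∑ i, (m i : 𝒦) * x i) ∉ Set.range emb) :
    AlgebraicIndependent K (fun i => (y i : 𝒦)) := by
  by_contra hdep
  obtain ⟨m, hm, t, htK, ht0, hDt⟩ :=
    AxE.kolchin D hadd hmul emb hconst K hDK hCK n x hx y hxy hdep
  set s : 𝒦 := ∑ i, (m i : 𝒦) * x i with hs
  have hsK : s ∈ K := Subfield.sum_mem _ fun i _ => mul_mem (intCast_mem K _) (hx i)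
  have hDs : D s = ∑ i, (m i : 𝒦) * D (x i) := by
    rw [hs, AxE.Dsum D hadd]
    apply Finset.sum_congr rfl
    intro i _
    rw [hmul]
    have hint : D ((m i : 𝒦)) = 0 := (hconst _).mpr ⟨(m i : ℂ), map_intCast emb (m i)⟩
    rw [hint]
    ring
  have hDt' : D t = D s * t := by rw [hDs]; exact hDt
  have hrange : s ∈ Set.range ⇑emb :=
    AxE.no_exp D hadd hmul emb hconst z hz s t (halg s hsK) (halg t htK) ht0 hDt'
  exact hnd m hm hrange
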